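/- With P_n(x) = det(M_n(x)) as above, for all n > 1: P_{2n}(x) = (P_n(x) − x·P_{n−1}(x))·(P_n(x) + x·P_{n−1}(x)). -/
import Mathlib

open Matrix Polynomial

noncomputable def Mmat (n : ℕ) (x : ℂ) : Matrix (Fin n) (Fin n) ℂ :=
  Matrix.of fun i j =>
    if (i : ℕ) = (j : ℕ) then 1
    else if (i : ℕ) + 1 = (j : ℕ) ∨ (j : ℕ) + 1 = (i : ℕ) then x else 0

noncomputable def P (n : ℕ) (x : ℂ) : ℂ := (Mmat n x).det

lemma P_zero (x : ℂ) : P 0 x = 1 := by simp [P]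

lemma P_one (x : ℂ) : P 1 x = 1 := by simp [P, Mmat]

lemma Prec (n : ℕ) (x : ℂ) : P (n + 2) x = P (n + 1) x - x ^ 2 * P n x := by
  have hm0 : (Mmat (n + 2) x).submatrix Fin.succ ((0 : Fin (n + 2)).succAbove)
      = Mmat (n + 1) x := by
    ext i j
    simp only [Matrix.submatrix_apply, Mmat, Matrix.of_apply, Fin.succAbove_zero,
      Fin.val_succ]
    split_ifs <;> first | rfl | omega | simp_all
  set N := (Mmat (n + 2) x).submatrix Fin.succ ((1 : Fin (n + 2)).succAbove) with hN
  have hm1 : N.submatrix ((0 : Fin (n + 1)).succAbove) Fin.succ = Mmat n x := by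
    ext i j
    rw [hN]
    simp only [Matrix.submatrix_apply, Fin.succAbove_zero, ← Fin.succ_zero_eq_one,
      Fin.succ_succAbove_succ, Mmat, Matrix.of_apply, Fin.val_succ]
    split_ifs <;> first | rfl | omega | simp_all
  have hN00 : N 0 0 = x := by
    rw [hN]
    simp only [Matrix.submatrix_apply, ← Fin.succ_zero_eq_one, Fin.succ_succAbove_zero,
      Mmat, Matrix.of_apply]
    norm_num
  have hNcol : ∀ i : Fin n, N i.succ 0 = 0 := by
    intro i
    rw [hN]
    simp only [Matrix.submatrix_apply, ← Fin.succ_zero_eq_one, Fin.succ_succAbove_zero,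
      Mmat, Matrix.of_apply, Fin.val_succ, Fin.val_zero]
    split_ifs <;> first | rfl | omega | simp_all
  have hdetN : N.det = x * P n x := by
    rw [Matrix.det_succ_column_zero, Fin.sum_univ_succ]
    rw [Finset.sum_eq_zero (fun i _ => by rw [hNcol]; ring)]
    rw [hN00, hm1]
    simp [P]
  have hrow : ∀ j : Fin n, Mmat (n + 2) x 0 j.succ.succ = 0 := by
    intro j
    simp only [Mmat, Matrix.of_apply, Fin.val_succ, Fin.val_zero]
    split_ifs <;> first | rfl | omega | simp_all
  have h00 : Mmat (n + 2) x 0 0 = 1 := by simp [Mmat]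
  have h01 : Mmat (n + 2) x 0 1 = x := by
    simp only [Mmat, Matrix.of_apply, Fin.val_zero, Fin.val_one]
    norm_num
  rw [show P (n+2) x = (Mmat (n+2) x).det from rfl, Matrix.det_succ_row_zero,
    Fin.sum_univ_succ, Fin.sum_univ_succ]
  rw [Finset.sum_eq_zero (fun j _ => by rw [hrow]; ring)]
  rw [h00, hm0]
  have : ((0 : Fin (n + 1)).succ : Fin (n + 2)) = 1 := Fin.succ_zero_eq_one
  rw [this, h01, hdetN]
  simp [P]
  ring

lemma P_add (m n : ℕ) (x : ℂ) :
    P (m + n + 2) x = P (m + 1) x * P (n + 1) x - x ^ 2 * P m x * P n x := by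
  induction n using Nat.twoStepInduction with
  | zero =>
    rw [Nat.add_zero, Prec, P_one, P_zero]; ring
  | one =>
    have h2 : P 2 x = 1 - x ^ 2 := by
      rw [show (2:ℕ) = 0 + 2 from rfl, Prec, P_one, P_zero]; ring
    rw [show m + 1 + 2 = (m + 1) + 2 from rfl, Prec, show m + 1 + 1 = m + 0 + 2 from by ring,
      Prec, Nat.add_zero, h2, P_one]
    ring
  | more k ih1 ih2 =>
    have h1 := Prec (m + k + 2) x
    rw [show m + k + 2 + 2 = m + (k + 2) + 2 by ring,
      show m + k + 2 + 1 = m + (k + 1) + 2 by ring] at h1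
    have h2 := Prec (k + 1) x
    rw [show k + 1 + 2 = k + 2 + 1 by ring] at h2
    rw [h1, ih1, ih2, h2, Prec k]
    ring

theorem P_even_factor (n : ℕ) (hn : 1 < n) (x : ℂ) :
    P (2 * n) x = (P n x - x * P (n - 1) x) * (P n x + x * P (n - 1) x) := by
  obtain ⟨k, rfl⟩ : ∃ k, n = k + 2 := ⟨n - 2, by omega⟩
  have := P_add (k + 1) (k + 1) x
  rw [show (k + 1) + (k + 1) + 2 = 2 * (k + 2) from by ring] at this
  rw [this, show k + 2 - 1 = k + 1 from rfl]
  ring
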